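/- arXiv:2403.01942 — 3 statements merged into one kernel-verified Lean document; each statement's English description precedes it below -/
import Mathlib

section
/- Let x_1, …, x_m be vectors in a real inner product space with ‖x_i‖ ≤ R for all i, let B ≥ 0, and let W = {w : ‖w‖ ≤ B and |⟨w, x_i⟩| ≥ 1 for all i} be nonempty. Then the expectation over a Rademacher vector σ of the supremum, over w ∈ W, of (1/m) ∑_{i=1}^m σ_i · sgn(⟨w, x_i⟩) is at most BR/√m, where sgn(t) = 1 if t > 0 and sgn(t) = −1 if t < 0 (the margin condition |⟨w, x_i⟩| ≥ 1 ensures ⟨w, x_i⟩ ≠ 0). -/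
open Finset
open scoped RealInnerProductSpace

lemma radem_abs_sign_le_one (t : ℝ) : |Real.sign t| ≤ 1 := by
  rcases lt_trichotomy t 0 with h|h|h
  · rw [Real.sign_of_neg h]; norm_num
  · simp [h, Real.sign_zero]
  · rw [Real.sign_of_pos h]; norm_num

lemma radem_sign_lipschitz {a b : ℝ} (ha : 1 ≤ |a|) (hb : 1 ≤ |b|) :
    |Real.sign a - Real.sign b| ≤ |a - b| := by
  rcases le_abs.mp ha with h1|h1 <;> rcases le_abs.mp hb with h2|h2
  · rw [Real.sign_of_pos (by linarith), Real.sign_of_pos (by linarith)]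
    simp [abs_nonneg]
  · rw [Real.sign_of_pos (by linarith), Real.sign_of_neg (by linarith),
      abs_of_nonneg (show (0:ℝ) ≤ a - b by linarith)]
    norm_num; linarith
  · rw [Real.sign_of_neg (by linarith), Real.sign_of_pos (by linarith),
      abs_of_nonpos (show a - b ≤ (0:ℝ) by linarith)]
    norm_num; linarith
  · rw [Real.sign_of_neg (by linarith), Real.sign_of_neg (by linarith)]
    simp [abs_nonneg]

lemma radem_bdd {ι : Type*} (f : ι → ℝ) (C : ℝ) (h : ∀ w, f w ≤ C) :
    BddAbove (Set.range f) := ⟨C, by rintro y ⟨w, rfl⟩; exact h w⟩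

lemma radem_ciSup_contraction {ι : Type*} [Nonempty ι] (a p s : ι → ℝ) (C : ℝ)
    (hbound : ∀ w, |a w| ≤ C ∧ |p w| ≤ C ∧ |s w| ≤ C)
    (hp : ∀ w v, p w - p v ≤ |s w - s v|) :
    (⨆ w, (a w + p w)) + (⨆ w, (a w - p w))
      ≤ (⨆ w, (a w + s w)) + (⨆ w, (a w - s w)) := by
  have h1 : BddAbove (Set.range fun w => a w + s w) :=
    radem_bdd _ (C + C) fun w => by
      have h := hbound w
      have := abs_le.mp h.1; have := abs_le.mp h.2.2; linarith
  have h2 : BddAbove (Set.range fun w => a w - s w) :=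
    radem_bdd _ (C + C) fun w => by
      have h := hbound w
      have := abs_le.mp h.1; have := abs_le.mp h.2.2; linarith
  have key : ∀ w v, (a w + p w) + (a v - p v)
      ≤ (⨆ w, (a w + s w)) + (⨆ w, (a w - s w)) := by
    intro w v
    have h := hp w v
    rcases le_total (s v) (s w) with h'|h'
    · have k1 := le_ciSup h1 w
      have k2 := le_ciSup h2 v
      rw [abs_of_nonneg (by linarith)] at h
      linarith
    · have k1 := le_ciSup h1 v
      have k2 := le_ciSup h2 w
      rw [abs_of_nonpos (by linarith)] at h
      linarith
  have hA : (⨆ w, (a w + p w)) ≤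
      ((⨆ w, (a w + s w)) + (⨆ w, (a w - s w))) - (⨆ w, (a w - p w)) := by
    refine ciSup_le fun w => ?_
    have : (⨆ v, (a v - p v)) ≤
        ((⨆ w, (a w + s w)) + (⨆ w, (a w - s w))) - (a w + p w) :=
      ciSup_le fun v => by linarith [key w v]
    linarith
  linarith

lemma radem_sum_flip {m : ℕ} (j : Fin m) (f : (Fin m → Bool) → ℝ) :
    ∑ σ : Fin m → Bool, f σ
      = ∑ σ : Fin m → Bool, f (Function.update σ j (!σ j)) := by
  have hinv : Function.Involutive (fun σ : Fin m → Bool => Function.update σ j (!σ j)) := by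
    intro σ
    funext i
    rcases eq_or_ne i j with rfl|h
    · simp
    · simp [Function.update_of_ne h]
  exact Fintype.sum_bijective _ hinv.bijective f _ (fun σ => by simp [hinv σ])

lemma radem_orth {m : ℕ} (i i' : Fin m) :
    ∑ σ : Fin m → Bool, (if σ i then (1:ℝ) else -1) * (if σ i' then (1:ℝ) else -1)
      = if i = i' then (2:ℝ)^m else 0 := by
  rcases eq_or_ne i i' with rfl|h
  · simp only [if_pos rfl]
    have : ∀ σ : Fin m → Bool,
        (if σ i then (1:ℝ) else -1) * (if σ i then (1:ℝ) else -1) = 1 := by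
      intro σ; cases σ i <;> norm_num
    rw [Finset.sum_congr rfl (fun σ _ => this σ)]
    simp [Finset.card_univ]
  · rw [if_neg h]
    have hflip := radem_sum_flip i
      (fun σ => (if σ i then (1:ℝ) else -1) * (if σ i' then (1:ℝ) else -1))
    have heq : ∀ σ : Fin m → Bool,
        (if Function.update σ i (!σ i) i then (1:ℝ) else -1) *
          (if Function.update σ i (!σ i) i' then (1:ℝ) else -1)
        = -((if σ i then (1:ℝ) else -1) * (if σ i' then (1:ℝ) else -1)) := by
      intro σ
      rw [Function.update_self, Function.update_of_ne (Ne.symm h)]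
      cases σ i <;> cases σ i' <;> norm_num
    simp only [heq] at hflip
    rw [Finset.sum_neg_distrib] at hflip
    linarith

lemma radem_step_core {ι : Type*} [Nonempty ι] (a t : ι → ℝ) (c : ℝ) (hc : |c| = 1)
    (C : ℝ) (hC : 1 ≤ C) (hbound : ∀ w, |a w| ≤ C ∧ |t w| ≤ C)
    (ht : ∀ w, 1 ≤ |t w|) :
    (⨆ w, (a w + c * Real.sign (t w))) + (⨆ w, (a w - c * Real.sign (t w)))
      ≤ (⨆ w, (a w + c * t w)) + (⨆ w, (a w - c * t w)) := by
  refine radem_ciSup_contraction a _ _ C (fun w => ?_) (fun w v => ?_)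
  · refine ⟨(hbound w).1, ?_, ?_⟩
    · rw [abs_mul, hc, one_mul]; exact le_trans (radem_abs_sign_le_one _) hC
    · rw [abs_mul, hc, one_mul]; exact (hbound w).2
  · calc c * Real.sign (t w) - c * Real.sign (t v)
        ≤ |c * Real.sign (t w) - c * Real.sign (t v)| := le_abs_self _
      _ = |Real.sign (t w) - Real.sign (t v)| := by
          rw [show c * Real.sign (t w) - c * Real.sign (t v)
              = c * (Real.sign (t w) - Real.sign (t v)) by ring, abs_mul, hc, one_mul]
      _ ≤ |t w - t v| := radem_sign_lipschitz (ht w) (ht v)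
      _ = |c * t w - c * t v| := by
          rw [show c * t w - c * t v = c * (t w - t v) by ring, abs_mul, hc, one_mul]

lemma radem_sum_step {m : ℕ} {ι : Type*} [Nonempty ι] (j : Fin m)
    (g g' : Fin m → ι → ℝ) (t : ι → ℝ) (D : ℝ) (hD : 1 ≤ D)
    (hgg' : ∀ i, i ≠ j → g i = g' i)
    (hgj : ∀ w, g j w = Real.sign (t w)) (hg'j : ∀ w, g' j w = t w)
    (ht : ∀ w, 1 ≤ |t w|)
    (hbd : ∀ i w, |g i w| ≤ D) (hbd' : ∀ i w, |g' i w| ≤ D) :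
    ∑ σ : Fin m → Bool, ⨆ w, ∑ i, (if σ i then (1:ℝ) else -1) * g i w
      ≤ ∑ σ : Fin m → Bool, ⨆ w, ∑ i, (if σ i then (1:ℝ) else -1) * g' i w := by
  have hD0 : (0:ℝ) ≤ D := le_trans zero_le_one hD
  have hF := radem_sum_flip j (fun σ => ⨆ w, ∑ i, (if σ i then (1:ℝ) else -1) * g i w)
  have hF' := radem_sum_flip j (fun σ => ⨆ w, ∑ i, (if σ i then (1:ℝ) else -1) * g' i w)
  have main : ∀ σ : Fin m → Bool,
      (⨆ w, ∑ i, (if σ i then (1:ℝ) else -1) * g i w)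
        + (⨆ w, ∑ i, (if Function.update σ j (!σ j) i then (1:ℝ) else -1) * g i w)
      ≤ (⨆ w, ∑ i, (if σ i then (1:ℝ) else -1) * g' i w)
        + (⨆ w, ∑ i, (if Function.update σ j (!σ j) i then (1:ℝ) else -1) * g' i w) := by
    intro σ
    set c : ℝ := if σ j then (1:ℝ) else -1 with hcdef
    have hc : |c| = 1 := by rw [hcdef]; split_ifs <;> norm_num
    have hflipj : (if Function.update σ j (!σ j) j then (1:ℝ) else -1) = -c := by
      rw [Function.update_self, hcdef]; cases σ j <;> norm_num
    have hflipne : ∀ i : Fin m, i ≠ j →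
        (if Function.update σ j (!σ j) i then (1:ℝ) else -1)
          = (if σ i then (1:ℝ) else -1) := by
      intro i hij; rw [Function.update_of_ne hij]
    set a : ι → ℝ := fun w => ∑ i ∈ univ.erase j, (if σ i then (1:ℝ) else -1) * g i w
      with hadef
    have eq1 : ∀ w, (∑ i, (if σ i then (1:ℝ) else -1) * g i w)
        = a w + c * Real.sign (t w) := by
      intro w
      rw [← Finset.add_sum_erase _ _ (mem_univ j), hgj w, hadef]
      ring
    have eq2 : ∀ w, (∑ i, (if Function.update σ j (!σ j) i then (1:ℝ) else -1) * g i w)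
        = a w - c * Real.sign (t w) := by
      intro w
      rw [← Finset.add_sum_erase _ _ (mem_univ j), hgj w, hflipj,
        Finset.sum_congr rfl (fun i hi => by
          rw [hflipne i (Finset.ne_of_mem_erase hi)])]
      ring
    have eq3 : ∀ w, (∑ i, (if σ i then (1:ℝ) else -1) * g' i w)
        = a w + c * t w := by
      intro w
      rw [← Finset.add_sum_erase _ _ (mem_univ j), hg'j w,
        Finset.sum_congr rfl (fun i hi => by
          rw [← hgg' i (Finset.ne_of_mem_erase hi)])]
      ring
    have eq4 : ∀ w, (∑ i, (if Function.update σ j (!σ j) i then (1:ℝ) else -1) * g' i w)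
        = a w - c * t w := by
      intro w
      rw [← Finset.add_sum_erase _ _ (mem_univ j), hg'j w, hflipj,
        Finset.sum_congr rfl (fun i hi => by
          rw [hflipne i (Finset.ne_of_mem_erase hi),
            ← hgg' i (Finset.ne_of_mem_erase hi)])]
      ring
    rw [iSup_congr eq1, iSup_congr eq2, iSup_congr eq3, iSup_congr eq4]
    refine radem_step_core a t c hc ((m+1)*D) ?_ (fun w => ⟨?_, ?_⟩) ht
    · nlinarith [Nat.cast_nonneg (α := ℝ) m]
    · calc |a w| ≤ ∑ i ∈ univ.erase j, |(if σ i then (1:ℝ) else -1) * g i w| :=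
            Finset.abs_sum_le_sum_abs _ _
        _ ≤ ∑ i ∈ univ.erase j, D := by
            refine Finset.sum_le_sum fun i _ => ?_
            rw [abs_mul]
            have : |if σ i then (1:ℝ) else -1| = 1 := by split_ifs <;> norm_num
            rw [this, one_mul]; exact hbd i w
        _ = (univ.erase j).card * D := by rw [Finset.sum_const, nsmul_eq_mul]
        _ ≤ (m+1) * D := by
            refine mul_le_mul_of_nonneg_right ?_ hD0
            have h1 : (univ.erase j).card ≤ (univ : Finset (Fin m)).card :=
              Finset.card_le_card (Finset.erase_subset _ _)
            have : ((univ.erase j).card : ℝ) ≤ m := by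
              exact_mod_cast le_trans h1 (le_of_eq (by simp))
            linarith
    · rw [← hg'j w]
      refine le_trans (hbd' j w) ?_
      nlinarith [Nat.cast_nonneg (α := ℝ) m]
  have hsum := Finset.sum_le_sum (fun σ (_ : σ ∈ (univ : Finset (Fin m → Bool))) => main σ)
  rw [Finset.sum_add_distrib, Finset.sum_add_distrib] at hsum
  linarith [hF, hF', hsum]

lemma radem_contraction {E : Type*} [NormedAddCommGroup E] [InnerProductSpace ℝ E]
    {m : ℕ} (x : Fin m → E) {B R : ℝ} (hR : ∀ i, ‖x i‖ ≤ R) (hB : 0 ≤ B) (hR0 : 0 ≤ R)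
    [Nonempty {w : E // ‖w‖ ≤ B ∧ ∀ i, 1 ≤ |⟪w, x i⟫|}] (k : ℕ) :
    ∑ σ : Fin m → Bool, ⨆ w : {w : E // ‖w‖ ≤ B ∧ ∀ i, 1 ≤ |⟪w, x i⟫|},
        ∑ i, (if σ i then (1:ℝ) else -1) *
          (if (i:ℕ) < k then Real.sign ⟪(w:E), x i⟫ else ⟪(w:E), x i⟫)
      ≤ ∑ σ : Fin m → Bool, ⨆ w : {w : E // ‖w‖ ≤ B ∧ ∀ i, 1 ≤ |⟪w, x i⟫|},
        ∑ i, (if σ i then (1:ℝ) else -1) * ⟪(w:E), x i⟫ := by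
  have hBR : (0:ℝ) ≤ B * R := mul_nonneg hB hR0
  induction k with
  | zero => simp
  | succ k ih =>
    refine le_trans ?_ ih
    by_cases hk : k < m
    · refine radem_sum_step (ι := {w : E // ‖w‖ ≤ B ∧ ∀ i, 1 ≤ |⟪w, x i⟫|}) (⟨k, hk⟩ : Fin m)
        (fun i w => if (i:ℕ) < k+1 then Real.sign ⟪(w:E), x i⟫ else ⟪(w:E), x i⟫)
        (fun i w => if (i:ℕ) < k then Real.sign ⟪(w:E), x i⟫ else ⟪(w:E), x i⟫)
        (fun w => ⟪(w:E), x ⟨k,hk⟩⟫) (1 + B * R) (by linarith) ?_ ?_ ?_ ?_ ?_ ?_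
      · intro i hij
        funext w
        have hne : (i:ℕ) ≠ k := fun h => hij (Fin.ext h)
        rcases Nat.lt_or_ge (i:ℕ) k with h|h
        · simp only [if_pos h, if_pos (Nat.lt_succ_of_lt h)]
        · rw [if_neg (by omega), if_neg (by omega)]
      · intro w; simp
      · intro w; simp
      · intro w; exact w.2.2 _
      · intro i w
        split
        · exact le_trans (radem_abs_sign_le_one _) (by linarith)
        · calc |⟪(w:E), x i⟫| ≤ ‖(w:E)‖ * ‖x i‖ := abs_real_inner_le_norm _ _
            _ ≤ B * R := mul_le_mul w.2.1 (hR i) (norm_nonneg _) hB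
            _ ≤ 1 + B*R := by linarith
      · intro i w
        split
        · exact le_trans (radem_abs_sign_le_one _) (by linarith)
        · calc |⟪(w:E), x i⟫| ≤ ‖(w:E)‖ * ‖x i‖ := abs_real_inner_le_norm _ _
            _ ≤ B * R := mul_le_mul w.2.1 (hR i) (norm_nonneg _) hB
            _ ≤ 1 + B*R := by linarith
    · apply le_of_eq
      refine Finset.sum_congr rfl fun σ _ => ?_
      refine iSup_congr fun w => Finset.sum_congr rfl fun i _ => ?_
      have hi : (i:ℕ) < k := lt_of_lt_of_le i.isLt (not_lt.mp hk)
      rw [if_pos hi, if_pos (Nat.lt_succ_of_lt hi)]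

/-- Empirical Rademacher complexity of the margin-constrained linear sign-classifier class
`H = {x ↦ sgn⟪w, x⟫ : ‖w‖ ≤ B, |⟪w, x i⟫| ≥ 1 for all i}` on a sample
`x 0, …, x (m-1)` with `‖x i‖ ≤ R` is at most `B * R / √m`.  The Rademacher vector is
encoded as `σ : Fin m → Bool` (`true ↦ 1`, `false ↦ -1`), uniform over `{-1,1}^m`;
`Real.sign t` equals `1` for `t > 0` and `-1` for `t < 0` (the margin condition ensures
`⟪w, x i⟫ ≠ 0`). -/
theorem rademacher_complexity_sign_class_le
    {E : Type*} [NormedAddCommGroup E] [InnerProductSpace ℝ E]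
    (m : ℕ) (hm : 0 < m) (x : Fin m → E) (R B : ℝ)
    (hR : ∀ i, ‖x i‖ ≤ R) (hB : 0 ≤ B)
    (hW : ∃ w : E, ‖w‖ ≤ B ∧ ∀ i, 1 ≤ |⟪w, x i⟫|) :
    (∑ σ : Fin m → Bool,
        ⨆ w : {w : E // ‖w‖ ≤ B ∧ ∀ i, 1 ≤ |⟪w, x i⟫|},
          (1 / (m : ℝ)) * ∑ i, (if σ i then (1 : ℝ) else -1) * Real.sign ⟪(w : E), x i⟫)
        / 2 ^ m
      ≤ B * R / Real.sqrt m := by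
  obtain ⟨w₀, hw₀⟩ := hW
  haveI : Nonempty {w : E // ‖w‖ ≤ B ∧ ∀ i, 1 ≤ |⟪w, x i⟫|} := ⟨⟨w₀, hw₀⟩⟩
  have hR0 : 0 ≤ R := le_trans (norm_nonneg (x ⟨0, hm⟩)) (hR ⟨0, hm⟩)
  have hm' : (0:ℝ) < m := by exact_mod_cast hm
  set s := Real.sqrt m with hsdef
  have hs : 0 < s := Real.sqrt_pos.mpr hm'
  have hs2 : s * s = m := Real.mul_self_sqrt hm'.le
  -- pull out 1/m from the sup
  have hpull : ∀ σ : Fin m → Bool,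
      (⨆ w : {w : E // ‖w‖ ≤ B ∧ ∀ i, 1 ≤ |⟪w, x i⟫|},
        (1/(m:ℝ)) * ∑ i, (if σ i then (1:ℝ) else -1) * Real.sign ⟪(w:E), x i⟫)
      = (1/(m:ℝ)) * ⨆ w : {w : E // ‖w‖ ≤ B ∧ ∀ i, 1 ≤ |⟪w, x i⟫|},
          ∑ i, (if σ i then (1:ℝ) else -1) * Real.sign ⟪(w:E), x i⟫ :=
    fun σ => (Real.mul_iSup_of_nonneg (by positivity) _).symm
  -- the sign sup equals the k = m mixed sup
  have hsign_eq : (∑ σ : Fin m → Bool, ⨆ w : {w : E // ‖w‖ ≤ B ∧ ∀ i, 1 ≤ |⟪w, x i⟫|},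
        ∑ i, (if σ i then (1:ℝ) else -1) * Real.sign ⟪(w:E), x i⟫)
      = ∑ σ : Fin m → Bool, ⨆ w : {w : E // ‖w‖ ≤ B ∧ ∀ i, 1 ≤ |⟪w, x i⟫|},
        ∑ i, (if σ i then (1:ℝ) else -1) *
          (if (i:ℕ) < m then Real.sign ⟪(w:E), x i⟫ else ⟪(w:E), x i⟫) := by
    refine Finset.sum_congr rfl fun σ _ => ?_
    refine iSup_congr fun w => Finset.sum_congr rfl fun i _ => ?_
    rw [if_pos i.isLt]
  have hcon := radem_contraction x hR hB hR0 m
  -- linear sup bound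
  have hlin : ∀ σ : Fin m → Bool,
      (⨆ w : {w : E // ‖w‖ ≤ B ∧ ∀ i, 1 ≤ |⟪w, x i⟫|},
        ∑ i, (if σ i then (1:ℝ) else -1) * ⟪(w:E), x i⟫)
      ≤ B * ‖∑ i, (if σ i then (1:ℝ) else -1) • x i‖ := by
    intro σ
    refine ciSup_le fun w => ?_
    have hinner : ∑ i, (if σ i then (1:ℝ) else -1) * ⟪(w:E), x i⟫
        = ⟪(w:E), ∑ i, (if σ i then (1:ℝ) else -1) • x i⟫ := by
      rw [inner_sum]
      exact Finset.sum_congr rfl fun i _ => (real_inner_smul_right _ _ _).symm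
    rw [hinner]
    calc ⟪(w:E), ∑ i, (if σ i then (1:ℝ) else -1) • x i⟫
        ≤ ‖(w:E)‖ * ‖∑ i, (if σ i then (1:ℝ) else -1) • x i‖ := real_inner_le_norm _ _
      _ ≤ B * ‖∑ i, (if σ i then (1:ℝ) else -1) • x i‖ :=
          mul_le_mul_of_nonneg_right w.2.1 (norm_nonneg _)
  -- sum of squared norms
  have hsq : ∑ σ : Fin m → Bool, ‖∑ i, (if σ i then (1:ℝ) else -1) • x i‖^2
      = 2^m * ∑ i, ‖x i‖^2 := by
    have expand : ∀ σ : Fin m → Bool, ‖∑ i, (if σ i then (1:ℝ) else -1) • x i‖^2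
        = ∑ i, ∑ i', ((if σ i then (1:ℝ) else -1) * (if σ i' then (1:ℝ) else -1))
            * ⟪x i, x i'⟫ := by
      intro σ
      rw [← real_inner_self_eq_norm_sq, sum_inner]
      refine Finset.sum_congr rfl fun i _ => ?_
      rw [real_inner_smul_left, inner_sum, Finset.mul_sum]
      refine Finset.sum_congr rfl fun i' _ => ?_
      rw [real_inner_smul_right]; ring
    rw [Finset.sum_congr rfl fun σ _ => expand σ, Finset.sum_comm]
    have : ∀ i : Fin m, (∑ σ : Fin m → Bool, ∑ i',
        ((if σ i then (1:ℝ) else -1) * (if σ i' then (1:ℝ) else -1)) * ⟪x i, x i'⟫)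
        = 2^m * ‖x i‖^2 := by
      intro i
      rw [Finset.sum_comm]
      have h1 : ∀ i' : Fin m, (∑ σ : Fin m → Bool,
          ((if σ i then (1:ℝ) else -1) * (if σ i' then (1:ℝ) else -1)) * ⟪x i, x i'⟫)
          = (if i = i' then (2:ℝ)^m else 0) * ⟪x i, x i'⟫ := by
        intro i'
        rw [← Finset.sum_mul, radem_orth]
      rw [Finset.sum_congr rfl fun i' _ => h1 i']
      simp only [ite_mul, zero_mul]
      rw [Finset.sum_ite_eq]
      simp [real_inner_self_eq_norm_sq]
    rw [Finset.sum_congr rfl fun i _ => this i, ← Finset.mul_sum]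
  -- Cauchy-Schwarz over σ
  have hcard : ((univ : Finset (Fin m → Bool)).card : ℝ) = 2^m := by
    simp [Finset.card_univ]
  have hcheb := sq_sum_le_card_mul_sum_sq
    (s := (univ : Finset (Fin m → Bool)))
    (f := fun σ => ‖∑ i, (if σ i then (1:ℝ) else -1) • x i‖)
  rw [hcard, hsq] at hcheb
  have hxsum : ∑ i, ‖x i‖^2 ≤ m * R^2 := by
    calc ∑ i, ‖x i‖^2 ≤ ∑ i : Fin m, R^2 :=
          Finset.sum_le_sum fun i _ => by nlinarith [hR i, norm_nonneg (x i)]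
      _ = m * R^2 := by simp [Finset.sum_const, nsmul_eq_mul]
  have h2m : (0:ℝ) < 2^m := by positivity
  have hnormsum : ∑ σ : Fin m → Bool, ‖∑ i, (if σ i then (1:ℝ) else -1) • x i‖
      ≤ 2^m * (s * R) := by
    have hnn : (0:ℝ) ≤ ∑ σ : Fin m → Bool, ‖∑ i, (if σ i then (1:ℝ) else -1) • x i‖ :=
      Finset.sum_nonneg fun σ _ => norm_nonneg _
    have hub : (∑ σ : Fin m → Bool, ‖∑ i, (if σ i then (1:ℝ) else -1) • x i‖)^2
        ≤ (2^m * (s * R))^2 := by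
      calc (∑ σ : Fin m → Bool, ‖∑ i, (if σ i then (1:ℝ) else -1) • x i‖)^2
          ≤ 2^m * (2^m * ∑ i, ‖x i‖^2) := hcheb
        _ ≤ 2^m * (2^m * (m * R^2)) :=
            mul_le_mul_of_nonneg_left (mul_le_mul_of_nonneg_left hxsum h2m.le) h2m.le
        _ = (2^m * (s * R))^2 := by
            have : (m:ℝ) = s * s := hs2.symm
            rw [this]; ring
    nlinarith [hub, hnn, mul_nonneg (mul_nonneg h2m.le hs.le) hR0]
  -- assemble
  have hnum : ∑ σ : Fin m → Bool,
      ⨆ w : {w : E // ‖w‖ ≤ B ∧ ∀ i, 1 ≤ |⟪w, x i⟫|},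
        (1/(m:ℝ)) * ∑ i, (if σ i then (1:ℝ) else -1) * Real.sign ⟪(w:E), x i⟫
      ≤ (1/(m:ℝ)) * (B * (2^m * (s * R))) := by
    rw [Finset.sum_congr rfl fun σ _ => hpull σ, ← Finset.mul_sum]
    have step1 : (∑ σ : Fin m → Bool, ⨆ w : {w : E // ‖w‖ ≤ B ∧ ∀ i, 1 ≤ |⟪w, x i⟫|},
        ∑ i, (if σ i then (1:ℝ) else -1) * Real.sign ⟪(w:E), x i⟫)
        ≤ B * (2^m * (s * R)) := by
      rw [hsign_eq]
      refine le_trans hcon ?_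
      calc (∑ σ : Fin m → Bool, ⨆ w : {w : E // ‖w‖ ≤ B ∧ ∀ i, 1 ≤ |⟪w, x i⟫|},
            ∑ i, (if σ i then (1:ℝ) else -1) * ⟪(w:E), x i⟫)
          ≤ ∑ σ : Fin m → Bool, B * ‖∑ i, (if σ i then (1:ℝ) else -1) • x i‖ :=
            Finset.sum_le_sum fun σ _ => hlin σ
        _ = B * ∑ σ : Fin m → Bool, ‖∑ i, (if σ i then (1:ℝ) else -1) • x i‖ := by
            rw [← Finset.mul_sum]
        _ ≤ B * (2^m * (s * R)) := mul_le_mul_of_nonneg_left hnormsum hB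
    have h1m : (0:ℝ) ≤ 1/(m:ℝ) := by positivity
    exact mul_le_mul_of_nonneg_left step1 h1m
  have hfinal : ((1/(m:ℝ)) * (B * (2^m * (s * R)))) / 2^m = B * R / s := by
    field_simp
    linear_combination (B * R) * hs2
  calc (∑ σ : Fin m → Bool,
        ⨆ w : {w : E // ‖w‖ ≤ B ∧ ∀ i, 1 ≤ |⟪w, x i⟫|},
          (1/(m:ℝ)) * ∑ i, (if σ i then (1:ℝ) else -1) * Real.sign ⟪(w:E), x i⟫) / 2^m
      ≤ ((1/(m:ℝ)) * (B * (2^m * (s * R)))) / 2^m := by gcongr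
    _ = B * R / s := hfinal
end

section
/- Let p and e be probability densities with respect to a σ-finite measure ν on a measurable space Z, let α ∈ [0,1], define the mixture density q = α p + (1−α) e, and let L : Z → ℝ be measurable with 0 ≤ L(z) ≤ 1 for all z. Then ∫ L p dν ≤ ∫ L q dν + (1−α) √(1 − exp(−D_KL(p‖e))). -/
open MeasureTheory
open scoped Classical ENNReal

/-- The Kullback–Leibler divergence `D_KL(p‖q) = ∫ p log(p/q) dν` between two densities
`p, q` w.r.t. a measure `ν`, taken to be `+∞` if the measure with density `p` is not
absolutely continuous w.r.t. the measure with density `q`, or if the defining integrand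
is not integrable (in which case the integral diverges to `+∞`). -/
noncomputable def klDiv {Z : Type*} [MeasurableSpace Z] (ν : Measure Z) (p q : Z → ℝ) :
    ℝ≥0∞ :=
  if (ν.withDensity fun z => ENNReal.ofReal (p z)) ≪
        (ν.withDensity fun z => ENNReal.ofReal (q z)) ∧
      Integrable (fun z => p z * Real.log (p z / q z)) ν then
    ENNReal.ofReal (∫ z, p z * Real.log (p z / q z) ∂ν)
  else ∞

/-- `expNeg x = exp (-x)` for `x : ℝ≥0∞`, with the convention `exp (-∞) = 0`. -/
noncomputable def expNeg (x : ℝ≥0∞) : ℝ :=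
  if x = ∞ then 0 else Real.exp (-x.toReal)


lemma aux_mul_sqrt_div {a b : ℝ} (ha : 0 ≤ a) :
    a * Real.sqrt (b / a) = Real.sqrt (a * b) := by
  rcases eq_or_lt_of_le ha with h | h
  · simp [← h]
  · have : a * b = a ^ 2 * (b / a) := by field_simp
    rw [this, Real.sqrt_mul (sq_nonneg a), Real.sqrt_sq h.le]

lemma aux_mul_log_div (a b : ℝ) : a * Real.log (b / a) = -(a * Real.log (a / b)) := by
  rcases eq_or_ne a 0 with h | h
  · simp [h]
  rcases eq_or_ne b 0 with h' | h'
  · simp [h']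
  rw [Real.log_div h' h, Real.log_div h h']
  ring

lemma aux_sqrt_mul_le {a b : ℝ} (ha : 0 ≤ a) (hb : 0 ≤ b) :
    Real.sqrt (a * b) ≤ (a + b) / 2 := by
  have h1 : a * b ≤ ((a + b) / 2) ^ 2 := by nlinarith [sq_nonneg (a - b)]
  calc Real.sqrt (a * b) ≤ Real.sqrt (((a + b) / 2) ^ 2) := Real.sqrt_le_sqrt h1
    _ = (a + b) / 2 := Real.sqrt_sq (by linarith)

/-- Bretagnolle–Huber core inequality. -/
lemma bh_core {Z : Type*} [MeasurableSpace Z] (ν : Measure Z) [SigmaFinite ν]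
    (p e : Z → ℝ) (hpm : Measurable p) (hem : Measurable e)
    (hp0 : ∀ z, 0 ≤ p z) (he0 : ∀ z, 0 ≤ e z)
    (hp1 : ∫ z, p z ∂ν = 1) (he1 : ∫ z, e z ∂ν = 1)
    (hpint : Integrable p ν) (heint : Integrable e ν)
    (hac : (ν.withDensity fun z => ENNReal.ofReal (p z)) ≪
        (ν.withDensity fun z => ENNReal.ofReal (e z)))
    (hint : Integrable (fun z => p z * Real.log (p z / e z)) ν) :
    Real.exp (-∫ z, p z * Real.log (p z / e z) ∂ν)
      ≤ (∫ z, min (p z) (e z) ∂ν) * (2 - ∫ z, min (p z) (e z) ∂ν) := by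
  set μ : Measure Z := ν.withDensity fun z => ENNReal.ofReal (p z) with hμ
  set r : ℝ := ∫ z, p z * Real.log (p z / e z) ∂ν with hr
  set m : ℝ := ∫ z, min (p z) (e z) ∂ν with hm
  have hfp : Measurable fun z => (p z).toNNReal := measurable_real_toNNReal.comp hpm
  have hμ' : μ = ν.withDensity fun z => ((p z).toNNReal : ℝ≥0∞) := rfl
  -- μ is a probability measure
  have hprob : IsProbabilityMeasure μ := by
    constructor
    rw [hμ, withDensity_apply _ MeasurableSet.univ, Measure.restrict_univ,
      ← ofReal_integral_eq_lintegral_ofReal hpint (ae_of_all _ hp0), hp1, ENNReal.ofReal_one]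
  -- integrability facts over ν
  have hmin_int : Integrable (fun z => min (p z) (e z)) ν := by
    refine hpint.mono (hpm.min hem).aestronglyMeasurable (ae_of_all _ fun z => ?_)
    rw [Real.norm_eq_abs, Real.norm_eq_abs, abs_of_nonneg (le_min (hp0 z) (he0 z)),
      abs_of_nonneg (hp0 z)]
    exact min_le_left _ _
  have hmax_eq : (fun z => max (p z) (e z)) = fun z => p z + e z - min (p z) (e z) := by
    funext z
    have := min_add_max (p z) (e z)
    linarith
  have hpe : Integrable (fun z => p z + e z) ν := hpint.add heint
  have hmax_int : Integrable (fun z => max (p z) (e z)) ν := by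
    rw [hmax_eq]; exact hpe.sub hmin_int
  have hM : ∫ z, max (p z) (e z) ∂ν = 2 - m := by
    rw [hmax_eq, integral_sub hpe hmin_int, integral_add hpint heint, hp1, he1, hm]
    ring
  have hsqrtpe_int : Integrable (fun z => Real.sqrt (p z * e z)) ν := by
    refine Integrable.mono' ((hpint.add heint).div_const 2)
      ((hpm.mul hem).sqrt).aestronglyMeasurable (ae_of_all _ fun z => ?_)
    rw [Real.norm_eq_abs, abs_of_nonneg (Real.sqrt_nonneg _)]
    exact aux_sqrt_mul_le (hp0 z) (he0 z)
  -- a.e. positivity under μ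
  have hppos : ∀ᵐ z ∂μ, 0 < p z := by
    rw [hμ, ae_withDensity_iff (f := fun z => ENNReal.ofReal (p z)) hpm.ennreal_ofReal]
    refine ae_of_all _ fun z hz => ?_
    rcases (hp0 z).lt_or_eq with h | h
    · exact h
    · exact absurd (by simp [← h]) hz
  have hepos : ∀ᵐ z ∂μ, 0 < e z := by
    have hN : MeasurableSet {z | e z = 0} := hem (measurableSet_singleton 0)
    have h0 : (ν.withDensity fun z => ENNReal.ofReal (e z)) {z | e z = 0} = 0 := by
      rw [withDensity_apply _ hN]
      have hz0 : ∀ᵐ z ∂ν, z ∈ {z | e z = 0} → ENNReal.ofReal (e z) = (fun _ => (0:ℝ≥0∞)) z :=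
        ae_of_all _ fun z hz => by
          have : e z = 0 := hz
          simp [this]
      rw [setLIntegral_congr_fun_ae hN hz0, lintegral_zero]
    have hμ0 : μ {z | e z = 0} = 0 := hac h0
    rw [ae_iff]
    convert hμ0 using 2
    ext z
    simp only [Set.mem_setOf_eq, not_lt]
    exact ⟨fun h => le_antisymm h (he0 z), fun h => le_of_eq h⟩
  -- transfer of integrals between μ and ν
  have hcoe : ∀ z (x : ℝ), (p z).toNNReal • x = p z * x := fun z x => by
    simp [NNReal.smul_def, Real.coe_toNNReal _ (hp0 z)]
  have hint_transfer : ∀ (g : Z → ℝ), ∫ z, g z ∂μ = ∫ z, p z * g z ∂ν := by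
    intro g
    rw [hμ', integral_withDensity_eq_integral_smul hfp]
    exact integral_congr_ae (ae_of_all _ fun z => hcoe z (g z))
  -- the half-log function
  set h : Z → ℝ := fun z => Real.log (e z / p z) / 2 with hh
  have hg_int : Integrable (fun z => Real.log (e z / p z)) μ := by
    rw [hμ', integrable_withDensity_iff_integrable_smul hfp]
    have : (fun z => (p z).toNNReal • Real.log (e z / p z))
        = fun z => -(p z * Real.log (p z / e z)) := by
      funext z; rw [hcoe z, aux_mul_log_div]
    rw [this]
    exact hint.neg
  have hh_int : Integrable h μ := hg_int.div_const 2
  have hexp_eq : ∀ᵐ z ∂μ, Real.exp (h z) = Real.sqrt (e z / p z) := by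
    filter_upwards [hppos, hepos] with z hp he
    have hpos : 0 < e z / p z := div_pos he hp
    rw [hh]
    simp only
    rw [← Real.log_sqrt hpos.le, Real.exp_log (Real.sqrt_pos.mpr hpos)]
  have hsq_int : Integrable (fun z => Real.sqrt (e z / p z)) μ := by
    rw [hμ', integrable_withDensity_iff_integrable_smul hfp]
    have : (fun z => (p z).toNNReal • Real.sqrt (e z / p z))
        = fun z => Real.sqrt (p z * e z) := by
      funext z; rw [hcoe z, aux_mul_sqrt_div (hp0 z)]
    rw [this]
    exact hsqrtpe_int
  have hexp_int : Integrable (fun z => Real.exp (h z)) μ := hsq_int.congr (by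
    filter_upwards [hexp_eq] with z hz using hz.symm)
  -- Jensen
  have jensen : Real.exp (∫ z, h z ∂μ) ≤ ∫ z, Real.exp (h z) ∂μ := by
    have := convexOn_exp.map_integral_le Real.continuous_exp.continuousOn isClosed_univ
      (ae_of_all _ fun z => Set.mem_univ (h z)) hh_int (by exact hexp_int)
    exact this
  set s : ℝ := ∫ z, Real.sqrt (p z * e z) ∂ν with hs
  have hint_h : ∫ z, h z ∂μ = -r / 2 := by
    rw [hh]
    simp only
    rw [integral_div, hint_transfer]
    have : (fun z => p z * Real.log (e z / p z)) = fun z => -(p z * Real.log (p z / e z)) := by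
      funext z; rw [aux_mul_log_div]
    rw [this, integral_neg, hr]
  have hint_exp : ∫ z, Real.exp (h z) ∂μ = s := by
    rw [integral_congr_ae hexp_eq, hint_transfer]
    rw [hs]
    congr 1
    funext z
    rw [aux_mul_sqrt_div (hp0 z)]
  have jensen' : Real.exp (-r / 2) ≤ s := by rw [← hint_h, ← hint_exp]; exact jensen
  have hexpr : Real.exp (-r) ≤ s ^ 2 := by
    have h1 : Real.exp (-r) = Real.exp (-r / 2) ^ 2 := by
      rw [← Real.exp_nat_mul]; congr 1; push_cast; ring
    rw [h1]
    exact pow_le_pow_left₀ (Real.exp_nonneg _) jensen' 2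
  -- Cauchy–Schwarz : s^2 ≤ m * (2 - m)
  have hm1 : m ≤ 1 := by
    rw [hm, ← hp1]
    exact integral_mono hmin_int hpint fun z => min_le_left _ _
  have hMpos : (0:ℝ) < 2 - m := by linarith
  have hsmm : s ^ 2 ≤ m * (2 - m) := by
    set t : ℝ := s / (2 - m) with ht
    have expand : ∀ z, (Real.sqrt (min (p z) (e z)) - t * Real.sqrt (max (p z) (e z))) ^ 2
        = min (p z) (e z) - 2 * t * Real.sqrt (p z * e z) + t ^ 2 * max (p z) (e z) := by
      intro z
      have h1 : Real.sqrt (min (p z) (e z)) ^ 2 = min (p z) (e z) :=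
        Real.sq_sqrt (le_min (hp0 z) (he0 z))
      have h2 : Real.sqrt (max (p z) (e z)) ^ 2 = max (p z) (e z) :=
        Real.sq_sqrt (le_max_of_le_left (hp0 z))
      have h3 : Real.sqrt (min (p z) (e z)) * Real.sqrt (max (p z) (e z))
          = Real.sqrt (p z * e z) := by
        rw [← Real.sqrt_mul (le_min (hp0 z) (he0 z)), min_mul_max]
      linear_combination h1 - 2 * t * h3 + t ^ 2 * h2
    have hpos : 0 ≤ ∫ z, (Real.sqrt (min (p z) (e z)) - t * Real.sqrt (max (p z) (e z))) ^ 2 ∂ν :=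
      integral_nonneg fun z => sq_nonneg _
    have hval : ∫ z, (Real.sqrt (min (p z) (e z)) - t * Real.sqrt (max (p z) (e z))) ^ 2 ∂ν
        = m - 2 * t * s + t ^ 2 * (2 - m) := by
      have : (fun z => (Real.sqrt (min (p z) (e z)) - t * Real.sqrt (max (p z) (e z))) ^ 2)
          = fun z => min (p z) (e z) - 2 * t * Real.sqrt (p z * e z)
              + t ^ 2 * max (p z) (e z) := funext expand
      have i1 : Integrable (fun z => 2 * t * Real.sqrt (p z * e z)) ν := hsqrtpe_int.const_mul _
      have i2 : Integrable (fun z => min (p z) (e z) - 2 * t * Real.sqrt (p z * e z)) ν :=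
        hmin_int.sub i1
      have i3 : Integrable (fun z => t ^ 2 * max (p z) (e z)) ν := hmax_int.const_mul _
      rw [this, integral_add i2 i3, integral_sub hmin_int i1,
        integral_const_mul, integral_const_mul, hM]
    rw [hval] at hpos
    rw [ht] at hpos
    have h4 : m - 2 * (s / (2 - m)) * s + (s / (2 - m)) ^ 2 * (2 - m) = m - s ^ 2 / (2 - m) := by
      field_simp
      ring
    rw [h4] at hpos
    have := (div_le_iff₀ hMpos).mp (by linarith : s ^ 2 / (2 - m) ≤ m)
    linarith [this]
  calc Real.exp (-r) ≤ s ^ 2 := hexpr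
    _ ≤ m * (2 - m) := hsmm

/-- For probability densities `p, e` w.r.t. a σ-finite measure `ν`, `α ∈ [0,1]`,
the mixture `q = α p + (1-α) e`, and a measurable loss `0 ≤ L ≤ 1`:
`∫ L p dν ≤ ∫ L q dν + (1-α) √(1 - exp (-D_KL(p‖e)))`. -/
theorem risk_le_pace_risk_add_kl
    {Z : Type*} [MeasurableSpace Z] (ν : Measure Z) [SigmaFinite ν]
    (p e : Z → ℝ) (hpm : Measurable p) (hem : Measurable e)
    (hp0 : ∀ z, 0 ≤ p z) (he0 : ∀ z, 0 ≤ e z)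
    (hp1 : ∫ z, p z ∂ν = 1) (he1 : ∫ z, e z ∂ν = 1)
    (α : ℝ) (hα0 : 0 ≤ α) (hα1 : α ≤ 1)
    (L : Z → ℝ) (hLm : Measurable L) (hL0 : ∀ z, 0 ≤ L z) (hL1 : ∀ z, L z ≤ 1) :
    ∫ z, L z * p z ∂ν
      ≤ (∫ z, L z * (α * p z + (1 - α) * e z) ∂ν)
          + (1 - α) * Real.sqrt (1 - expNeg (klDiv ν p e)) := by
  have hpint : Integrable p ν := by
    by_contra h
    rw [integral_undef h] at hp1
    norm_num at hp1
  have heint : Integrable e ν := by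
    by_contra h
    rw [integral_undef h] at he1
    norm_num at he1
  have hLp : Integrable (fun z => L z * p z) ν := by
    refine hpint.mono (hLm.mul hpm).aestronglyMeasurable (ae_of_all _ fun z => ?_)
    rw [Real.norm_eq_abs, Real.norm_eq_abs, abs_of_nonneg (mul_nonneg (hL0 z) (hp0 z)),
      abs_of_nonneg (hp0 z)]
    nlinarith [hL0 z, hL1 z, hp0 z]
  have hLe : Integrable (fun z => L z * e z) ν := by
    refine heint.mono (hLm.mul hem).aestronglyMeasurable (ae_of_all _ fun z => ?_)
    rw [Real.norm_eq_abs, Real.norm_eq_abs, abs_of_nonneg (mul_nonneg (hL0 z) (he0 z)),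
      abs_of_nonneg (he0 z)]
    nlinarith [hL0 z, hL1 z, he0 z]
  have hq : ∫ z, L z * (α * p z + (1 - α) * e z) ∂ν
      = α * ∫ z, L z * p z ∂ν + (1 - α) * ∫ z, L z * e z ∂ν := by
    have hfe : (fun z => L z * (α * p z + (1 - α) * e z))
        = fun z => α * (L z * p z) + (1 - α) * (L z * e z) := by
      funext z; ring
    rw [hfe, integral_add (hLp.const_mul α) (hLe.const_mul (1 - α)),
      integral_const_mul, integral_const_mul]
  have key : ∫ z, L z * p z ∂ν - ∫ z, L z * e z ∂ν
      ≤ Real.sqrt (1 - expNeg (klDiv ν p e)) := by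
    have hmin_int : Integrable (fun z => min (p z) (e z)) ν := by
      refine hpint.mono (hpm.min hem).aestronglyMeasurable (ae_of_all _ fun z => ?_)
      rw [Real.norm_eq_abs, Real.norm_eq_abs, abs_of_nonneg (le_min (hp0 z) (he0 z)),
        abs_of_nonneg (hp0 z)]
      exact min_le_left _ _
    set m : ℝ := ∫ z, min (p z) (e z) ∂ν with hm
    have hm0 : 0 ≤ m := integral_nonneg fun z => le_min (hp0 z) (he0 z)
    have hm1 : m ≤ 1 := by
      rw [hm, ← hp1]
      exact integral_mono hmin_int hpint fun z => min_le_left _ _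
    have step1 : ∫ z, L z * p z ∂ν - ∫ z, L z * e z ∂ν ≤ 1 - m := by
      have hptw : ∀ z, L z * p z - L z * e z ≤ p z - min (p z) (e z) := by
        intro z
        rcases le_total (p z) (e z) with hle | hle
        · rw [min_eq_left hle]
          nlinarith [hL0 z, hL1 z]
        · rw [min_eq_right hle]
          nlinarith [hL0 z, hL1 z]
      have iA : Integrable (fun z => L z * p z - L z * e z) ν := hLp.sub hLe
      have iB : Integrable (fun z => p z - min (p z) (e z)) ν := hpint.sub hmin_int
      have := integral_mono iA iB hptw
      rwa [integral_sub hLp hLe, integral_sub hpint hmin_int, hp1] at this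
    by_cases hcond : (ν.withDensity fun z => ENNReal.ofReal (p z)) ≪
          (ν.withDensity fun z => ENNReal.ofReal (e z)) ∧
        Integrable (fun z => p z * Real.log (p z / e z)) ν
    · set r : ℝ := ∫ z, p z * Real.log (p z / e z) ∂ν with hr
      have hkl : klDiv ν p e = ENNReal.ofReal r := by rw [klDiv, if_pos hcond]
      have hbh := bh_core ν p e hpm hem hp0 he0 hp1 he1 hpint heint hcond.1 hcond.2
      have hrle : r ≤ (ENNReal.ofReal r).toReal := by
        rcases le_or_gt 0 r with h | h
        · rw [ENNReal.toReal_ofReal h]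
        · rw [ENNReal.ofReal_of_nonpos h.le]
          simpa using h.le
      have hexpneg : expNeg (klDiv ν p e) ≤ Real.exp (-r) := by
        rw [hkl, expNeg, if_neg ENNReal.ofReal_ne_top]
        exact Real.exp_le_exp.mpr (by linarith)
      have hsq : (1 - m) ^ 2 ≤ 1 - expNeg (klDiv ν p e) := by
        have : Real.exp (-r) ≤ m * (2 - m) := hbh
        nlinarith [hexpneg]
      calc ∫ z, L z * p z ∂ν - ∫ z, L z * e z ∂ν ≤ 1 - m := step1
        _ = Real.sqrt ((1 - m) ^ 2) := (Real.sqrt_sq (by linarith)).symm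
        _ ≤ Real.sqrt (1 - expNeg (klDiv ν p e)) := Real.sqrt_le_sqrt hsq
    · have hkl : klDiv ν p e = ∞ := by rw [klDiv, if_neg hcond]
      rw [hkl, expNeg, if_pos rfl]
      have h1 : ∫ z, L z * p z ∂ν ≤ 1 := by
        rw [← hp1]
        exact integral_mono hLp hpint fun z => by nlinarith [hL0 z, hL1 z, hp0 z]
      have h2 : 0 ≤ ∫ z, L z * e z ∂ν := integral_nonneg fun z => mul_nonneg (hL0 z) (he0 z)
      have : Real.sqrt (1 - 0) = 1 := by norm_num
      rw [this]
      linarith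
  rw [hq]
  have := mul_le_mul_of_nonneg_left key (by linarith : (0:ℝ) ≤ 1 - α)
  linarith
end

section
/- Let p⁺, p⁻, e⁺, e⁻ be probability densities with respect to a σ-finite measure ν on a measurable space Z, let α ∈ [0,1], define the mixture densities q⁺ = α p⁺ + (1−α) e⁺ and q⁻ = α p⁻ + (1−α) e⁻, and let L : Z → ℝ be measurable with 0 ≤ L(z) ≤ 1 for all z. Then (1/2) ∫ L p⁺ dν + (1/2) ∫ L p⁻ dν ≤ (1/2) ∫ L q⁺ dν + (1/2) ∫ L q⁻ dν + (1−α) √(1 − exp(−D_KL(p⁺‖e⁺))) + (1−α) √(1 − exp(−D_KL(p⁻‖e⁻))). -/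
open MeasureTheory
open scoped Classical ENNReal

/-- A function with Bochner integral equal to 1 is integrable. -/
lemma integrable_of_integral_eq_one' {Z : Type*} [MeasurableSpace Z] {ν : Measure Z}
    {f : Z → ℝ} (h : ∫ z, f z ∂ν = 1) : Integrable f ν := by
  by_contra hc
  rw [integral_undef hc] at h
  norm_num at h

/-- Pointwise inequality `2 (p - √(p e)) ≤ p log (p / e)`. -/
lemma ptwise_log_ineq {p e : ℝ} (hp : 0 ≤ p) (he : 0 ≤ e) (h0 : e = 0 → p = 0) :
    2 * (p - Real.sqrt (p * e)) ≤ p * Real.log (p / e) := by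
  rcases eq_or_lt_of_le hp with hp0 | hp0
  · simp [← hp0]
  · have he0 : 0 < e := by
      rcases eq_or_lt_of_le he with he0 | he0
      · exact absurd (h0 he0.symm) (by linarith)
      · exact he0
    have hdiv : 0 < e / p := div_pos he0 hp0
    have hs : Real.log (Real.sqrt (e / p)) ≤ Real.sqrt (e / p) - 1 :=
      Real.log_le_sub_one_of_pos (Real.sqrt_pos.2 hdiv)
    rw [Real.log_sqrt hdiv.le] at hs
    have hlog : Real.log (e / p) = - Real.log (p / e) := by
      rw [← Real.log_inv]
      congr 1
      field_simp
    rw [hlog] at hs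
    have h5 : 2 - 2 * Real.sqrt (e / p) ≤ Real.log (p / e) := by linarith
    have hsqrt : Real.sqrt (e / p) * p = Real.sqrt (p * e) := by
      rw [show p * e = (e / p) * p ^ 2 by field_simp, Real.sqrt_mul hdiv.le,
        Real.sqrt_sq hp]
    have h6 := mul_le_mul_of_nonneg_left h5 hp
    calc 2 * (p - Real.sqrt (p * e)) = p * (2 - 2 * Real.sqrt (e / p)) := by
          rw [← hsqrt]; ring
      _ ≤ p * Real.log (p / e) := h6

/-- Core one-class inequality. -/
lemma risk_diff_le_two_sqrt {Z : Type*} [MeasurableSpace Z] (ν : Measure Z)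
    (p e : Z → ℝ) (hpm : Measurable p) (hem : Measurable e)
    (hp0 : ∀ z, 0 ≤ p z) (he0 : ∀ z, 0 ≤ e z)
    (hp1 : ∫ z, p z ∂ν = 1) (he1 : ∫ z, e z ∂ν = 1)
    (L : Z → ℝ) (hLm : Measurable L) (hL0 : ∀ z, 0 ≤ L z) (hL1 : ∀ z, L z ≤ 1) :
    (∫ z, L z * p z ∂ν) - (∫ z, L z * e z ∂ν)
      ≤ 2 * Real.sqrt (1 - expNeg (klDiv ν p e)) := by
  have hpint : Integrable p ν := integrable_of_integral_eq_one' hp1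
  have heint : Integrable e ν := integrable_of_integral_eq_one' he1
  have hminint : Integrable (fun z => min (p z) (e z)) ν := by
    refine hpint.mono' ((hpm.min hem).aestronglyMeasurable) (ae_of_all _ fun z => ?_)
    rw [Real.norm_of_nonneg (le_min (hp0 z) (he0 z))]
    exact min_le_left _ _
  have hpeint : Integrable (fun z => p z + e z) ν := hpint.add heint
  have hmaxint : Integrable (fun z => max (p z) (e z)) ν := by
    refine hpeint.mono' ((hpm.max hem).aestronglyMeasurable)
      (ae_of_all _ fun z => ?_)
    rw [Real.norm_of_nonneg (le_max_of_le_left (hp0 z))]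
    exact max_le (by linarith [he0 z]) (by linarith [hp0 z])
  have hsqle : ∀ z, Real.sqrt (p z * e z) ≤ p z + e z := by
    intro z
    have h1 : Real.sqrt (p z * e z) ^ 2 = p z * e z :=
      Real.sq_sqrt (mul_nonneg (hp0 z) (he0 z))
    nlinarith [Real.sqrt_nonneg (p z * e z), hp0 z, he0 z, sq_nonneg (p z - e z)]
  have hsqint : Integrable (fun z => Real.sqrt (p z * e z)) ν := by
    refine hpeint.mono' (((hpm.mul hem).sqrt).aestronglyMeasurable)
      (ae_of_all _ fun z => ?_)
    rw [Real.norm_of_nonneg (Real.sqrt_nonneg _)]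
    exact hsqle z
  have hLpint : Integrable (fun z => L z * p z) ν := by
    refine hpint.mono' ((hLm.mul hpm).aestronglyMeasurable) (ae_of_all _ fun z => ?_)
    rw [Real.norm_of_nonneg (mul_nonneg (hL0 z) (hp0 z))]
    nlinarith [hL1 z, hp0 z]
  have hLeint : Integrable (fun z => L z * e z) ν := by
    refine heint.mono' ((hLm.mul hem).aestronglyMeasurable) (ae_of_all _ fun z => ?_)
    rw [Real.norm_of_nonneg (mul_nonneg (hL0 z) (he0 z))]
    nlinarith [hL1 z, he0 z]
  set s := ∫ z, min (p z) (e z) ∂ν with hs_def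
  set ρ := ∫ z, Real.sqrt (p z * e z) ∂ν with hρ_def
  have hs0 : 0 ≤ s := integral_nonneg fun z => le_min (hp0 z) (he0 z)
  have hs1 : s ≤ 1 := by
    calc s ≤ ∫ z, p z ∂ν := integral_mono hminint hpint fun z => min_le_left _ _
      _ = 1 := hp1
  have hρ0 : 0 ≤ ρ := integral_nonneg fun z => Real.sqrt_nonneg _
  have hmaxval : ∫ z, max (p z) (e z) ∂ν = 2 - s := by
    have hcongr : ∫ z, max (p z) (e z) ∂ν
        = ∫ z, (p z + e z) - min (p z) (e z) ∂ν := by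
      refine integral_congr_ae (ae_of_all _ fun z => ?_)
      dsimp only
      rcases le_total (p z) (e z) with h | h
      · rw [max_eq_right h, min_eq_left h]; ring
      · rw [max_eq_left h, min_eq_right h]; ring
    rw [hcongr, integral_sub hpeint hminint, integral_add hpint heint, hp1, he1,
      ← hs_def]
    ring
  -- T ≤ 1 - s
  have hT : (∫ z, L z * p z ∂ν) - (∫ z, L z * e z ∂ν) ≤ 1 - s := by
    have hmono : ∫ z, (L z * p z - L z * e z) ∂ν
        ≤ ∫ z, (p z - min (p z) (e z)) ∂ν := by
      refine integral_mono (hLpint.sub hLeint) (hpint.sub hminint) fun z => ?_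
      rcases le_total (p z) (e z) with h | h
      · rw [min_eq_left h]
        nlinarith [hL0 z, hL1 z]
      · rw [min_eq_right h]
        nlinarith [hL0 z, hL1 z]
    rw [integral_sub hLpint hLeint, integral_sub hpint hminint, hp1] at hmono
    exact hmono
  -- Cauchy-Schwarz : ρ^2 ≤ s * (2 - s)
  have hCS : ρ ^ 2 ≤ s * (2 - s) := by
    have hconj : Real.HolderConjugate 2 2 := by
      exact Real.HolderConjugate.two_two
    have hf : MemLp (fun z => Real.sqrt (min (p z) (e z))) (ENNReal.ofReal 2) ν := by
      rw [show ENNReal.ofReal 2 = 2 by norm_num]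
      refine (memLp_two_iff_integrable_sq
        ((hpm.min hem).sqrt.aestronglyMeasurable)).2 ?_
      refine hminint.congr ?_
      refine ae_of_all _ fun z => ?_
      dsimp only
      rw [Real.sq_sqrt (le_min (hp0 z) (he0 z))]
    have hg : MemLp (fun z => Real.sqrt (max (p z) (e z))) (ENNReal.ofReal 2) ν := by
      rw [show ENNReal.ofReal 2 = 2 by norm_num]
      refine (memLp_two_iff_integrable_sq
        ((hpm.max hem).sqrt.aestronglyMeasurable)).2 ?_
      refine hmaxint.congr ?_
      refine ae_of_all _ fun z => ?_
      dsimp only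
      rw [Real.sq_sqrt (le_max_of_le_left (hp0 z))]
    have hH := integral_mul_le_Lp_mul_Lq_of_nonneg hconj
      (ae_of_all _ fun z => Real.sqrt_nonneg (min (p z) (e z)))
      (ae_of_all _ fun z => Real.sqrt_nonneg (max (p z) (e z))) hf hg
    have hprod : ∫ z, Real.sqrt (min (p z) (e z)) * Real.sqrt (max (p z) (e z)) ∂ν = ρ := by
      rw [hρ_def]
      refine integral_congr_ae (ae_of_all _ fun z => ?_)
      dsimp only
      rw [← Real.sqrt_mul (le_min (hp0 z) (he0 z))]
      congr 1
      rcases le_total (p z) (e z) with h | h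
      · rw [min_eq_left h, max_eq_right h]
      · rw [min_eq_right h, max_eq_left h]; ring
    have hfint : ∫ z, Real.sqrt (min (p z) (e z)) ^ (2 : ℝ) ∂ν = s := by
      rw [hs_def]
      refine integral_congr_ae (ae_of_all _ fun z => ?_)
      dsimp only
      rw [show ((2:ℝ)) = ((2:ℕ):ℝ) by norm_num, Real.rpow_natCast,
        Real.sq_sqrt (le_min (hp0 z) (he0 z))]
    have hgint : ∫ z, Real.sqrt (max (p z) (e z)) ^ (2 : ℝ) ∂ν = 2 - s := by
      rw [← hmaxval]
      refine integral_congr_ae (ae_of_all _ fun z => ?_)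
      dsimp only
      rw [show ((2:ℝ)) = ((2:ℕ):ℝ) by norm_num, Real.rpow_natCast,
        Real.sq_sqrt (le_max_of_le_left (hp0 z))]
    rw [hprod, hfint, hgint] at hH
    have hρle : ρ ≤ Real.sqrt s * Real.sqrt (2 - s) := by
      rw [Real.sqrt_eq_rpow, Real.sqrt_eq_rpow]
      exact hH
    have h2s : 0 ≤ 2 - s := by linarith
    calc ρ ^ 2 ≤ (Real.sqrt s * Real.sqrt (2 - s)) ^ 2 := by
          exact pow_le_pow_left₀ hρ0 hρle 2
      _ = s * (2 - s) := by
          rw [mul_pow, Real.sq_sqrt hs0, Real.sq_sqrt h2s]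
  have hρ1 : ρ ≤ 1 := by nlinarith [sq_nonneg (ρ - 1), sq_nonneg (1 - s)]
  -- case split on klDiv
  rw [klDiv]
  split_ifs with h
  · obtain ⟨hac, hint⟩ := h
    set D := ∫ z, p z * Real.log (p z / e z) ∂ν with hD_def
    -- a.e. e = 0 → p = 0
    have hae : ∀ᵐ z ∂ν, e z = 0 → p z = 0 := by
      have hS : MeasurableSet {z | e z = 0} := hem (measurableSet_singleton 0)
      have h1 : (ν.withDensity fun z => ENNReal.ofReal (e z)) {z | e z = 0} = 0 := by
        rw [withDensity_apply _ hS]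
        rw [setLIntegral_congr_fun_ae hS (ae_of_all _ fun z hz => by
          simp only [Set.mem_setOf_eq] at hz
          rw [hz, ENNReal.ofReal_zero] : ∀ᵐ z ∂ν, z ∈ {z | e z = 0} →
            ENNReal.ofReal (e z) = (fun _ => (0:ℝ≥0∞)) z)]
        simp
      have h2 := hac h1
      rw [withDensity_apply _ hS] at h2
      have h3 := (lintegral_eq_zero_iff (hpm.ennreal_ofReal)).1 h2
      have h4 := (ae_restrict_iff' hS).1 h3
      filter_upwards [h4] with z hz hez
      have := hz hez
      simp only [Pi.zero_apply, ENNReal.ofReal_eq_zero] at this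
      linarith [hp0 z]
    -- D ≥ 2 - 2ρ
    have hD : 2 - 2 * ρ ≤ D := by
      have hmono : ∫ z, 2 * (p z - Real.sqrt (p z * e z)) ∂ν
          ≤ ∫ z, p z * Real.log (p z / e z) ∂ν := by
        refine integral_mono_ae ((hpint.sub hsqint).const_mul 2) hint ?_
        filter_upwards [hae] with z hz
        exact ptwise_log_ineq (hp0 z) (he0 z) hz
      rw [integral_const_mul, integral_sub hpint hsqint, hp1, ← hρ_def] at hmono
      linarith
    have hD0 : 0 ≤ D := by linarith
    have hE : expNeg (ENNReal.ofReal D) = Real.exp (-D) := by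
      rw [expNeg, if_neg ENNReal.ofReal_ne_top, ENNReal.toReal_ofReal hD0]
    rw [hE]
    have hexp1 : Real.exp (-D) ≤ Real.exp (-(2 - 2 * ρ)) := by
      apply Real.exp_le_exp.2; linarith
    have h3ρ : (0:ℝ) < 3 - 2 * ρ := by linarith
    have hexp2 : Real.exp (-(2 - 2 * ρ)) ≤ 1 / (3 - 2 * ρ) := by
      rw [Real.exp_neg, inv_eq_one_div, div_le_div_iff₀ (Real.exp_pos _) h3ρ]
      nlinarith [Real.add_one_le_exp (2 - 2 * ρ)]
    have hpoly : 1 / (3 - 2 * ρ) ≤ 1 - (1 - s) ^ 2 / 4 := by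
      rw [div_le_iff₀ h3ρ]
      nlinarith [hCS, mul_nonneg (sub_nonneg.2 hρ1)
        (show (0:ℝ) ≤ 2 * ρ ^ 2 - ρ + 5 by nlinarith [sq_nonneg (ρ - 1)]),
        sq_nonneg (1 - s)]
    have hkey : (1 - s) / 2 ≤ Real.sqrt (1 - Real.exp (-D)) := by
      rw [Real.le_sqrt (by linarith) (by nlinarith [sq_nonneg (1 - s)])]
      nlinarith
    linarith
  · rw [expNeg, if_pos rfl]
    rw [show (1:ℝ) - 0 = 1 by ring, Real.sqrt_one]
    linarith

/-- Distributional core of Theorem 1: for clean class-conditional densities `p⁺, p⁻`,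
error densities `e⁺, e⁻`, mixing weight `α ∈ [0,1]` with pace densities
`q± = α p± + (1-α) e±`, and a measurable loss `0 ≤ L ≤ 1`:
`(1/2)∫ L p⁺ + (1/2)∫ L p⁻ ≤ (1/2)∫ L q⁺ + (1/2)∫ L q⁻
  + (1-α)√(1 - exp(-D_KL(p⁺‖e⁺))) + (1-α)√(1 - exp(-D_KL(p⁻‖e⁻)))`. -/
theorem clean_risk_le_pace_risk_add_kl_two_class
    {Z : Type*} [MeasurableSpace Z] (ν : Measure Z) [SigmaFinite ν]
    (pp pm ep em : Z → ℝ)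
    (hppm : Measurable pp) (hpmm : Measurable pm)
    (hepm : Measurable ep) (hemm : Measurable em)
    (hpp0 : ∀ z, 0 ≤ pp z) (hpm0 : ∀ z, 0 ≤ pm z)
    (hep0 : ∀ z, 0 ≤ ep z) (hem0 : ∀ z, 0 ≤ em z)
    (hpp1 : ∫ z, pp z ∂ν = 1) (hpm1 : ∫ z, pm z ∂ν = 1)
    (hep1 : ∫ z, ep z ∂ν = 1) (hem1 : ∫ z, em z ∂ν = 1)
    (α : ℝ) (hα0 : 0 ≤ α) (hα1 : α ≤ 1)
    (L : Z → ℝ) (hLm : Measurable L) (hL0 : ∀ z, 0 ≤ L z) (hL1 : ∀ z, L z ≤ 1) :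
    (1 / 2) * (∫ z, L z * pp z ∂ν) + (1 / 2) * (∫ z, L z * pm z ∂ν)
      ≤ (1 / 2) * (∫ z, L z * (α * pp z + (1 - α) * ep z) ∂ν)
          + (1 / 2) * (∫ z, L z * (α * pm z + (1 - α) * em z) ∂ν)
          + (1 - α) * Real.sqrt (1 - expNeg (klDiv ν pp ep))
          + (1 - α) * Real.sqrt (1 - expNeg (klDiv ν pm em)) := by
  have hint : ∀ (f : Z → ℝ), Measurable f → (∀ z, 0 ≤ f z) → (∫ z, f z ∂ν = 1) →
      Integrable (fun z => L z * f z) ν := by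
    intro f hfm hf0 hf1
    refine (integrable_of_integral_eq_one' hf1).mono'
      ((hLm.mul hfm).aestronglyMeasurable) (ae_of_all _ fun z => ?_)
    rw [Real.norm_of_nonneg (mul_nonneg (hL0 z) (hf0 z))]
    nlinarith [hL1 z, hf0 z]
  have hLpp := hint pp hppm hpp0 hpp1
  have hLpm := hint pm hpmm hpm0 hpm1
  have hLep := hint ep hepm hep0 hep1
  have hLem := hint em hemm hem0 hem1
  have hqp : ∫ z, L z * (α * pp z + (1 - α) * ep z) ∂ν
      = α * (∫ z, L z * pp z ∂ν) + (1 - α) * (∫ z, L z * ep z ∂ν) := by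
    rw [show (fun z => L z * (α * pp z + (1 - α) * ep z))
        = fun z => α * (L z * pp z) + (1 - α) * (L z * ep z) by funext z; ring]
    rw [integral_add (hLpp.const_mul α) (hLep.const_mul (1 - α)),
      integral_const_mul, integral_const_mul]
  have hqm : ∫ z, L z * (α * pm z + (1 - α) * em z) ∂ν
      = α * (∫ z, L z * pm z ∂ν) + (1 - α) * (∫ z, L z * em z ∂ν) := by
    rw [show (fun z => L z * (α * pm z + (1 - α) * em z))
        = fun z => α * (L z * pm z) + (1 - α) * (L z * em z) by funext z; ring]
    rw [integral_add (hLpm.const_mul α) (hLem.const_mul (1 - α)),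
      integral_const_mul, integral_const_mul]
  have hp := risk_diff_le_two_sqrt ν pp ep hppm hepm hpp0 hep0 hpp1 hep1 L hLm hL0 hL1
  have hm := risk_diff_le_two_sqrt ν pm em hpmm hemm hpm0 hem0 hpm1 hem1 L hLm hL0 hL1
  have h1α : (0:ℝ) ≤ 1 - α := by linarith
  have hp' := mul_le_mul_of_nonneg_left hp h1α
  have hm' := mul_le_mul_of_nonneg_left hm h1α
  rw [hqp, hqm]
  nlinarith [hp', hm']
end
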